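/- Let $M$ be a free $\mathbb{Z}$-module of finite rank. For a subset $\Gamma \subseteq M$, the following two conditions are equivalent: (a) there exist a $\mathbb{Z}$-submodule $N$ of $M$ and a convex subset $\Delta \subseteq M \otimes_{\mathbb{Z}} \mathbb{R}$ such that $\Gamma = N \cap \Delta$; (c) $\Gamma = \bigcup_{l \geq 1} \{ (\gamma_1 + \cdots + \gamma_l)/l \in \langle \Gamma \rangle_{\mathbb{Z}} : \gamma_1, \dots, \gamma_l \in \Gamma \}$, i.e., $\Gamma$ consists exactly of those elements of the $\mathbb{Z}$-span of $\Gamma$ that are averages of finitely many elements of $\Gamma$ (computed in $M \otimes_{\mathbb{Z}} \mathbb{Q}$). -/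

import Mathlib

open TensorProduct

open Matrix Finset in
lemma cast_li {ι : Type*} [Fintype ι] {m : ℕ} {v : Fin m → ι → ℚ}
    (hv : LinearIndependent ℚ v) :
    LinearIndependent ℝ (fun i (j : ι) => ((v i j : ℚ) : ℝ)) := by
  classical
  set A : Matrix (Fin m) ι ℚ := Matrix.of v with hA
  set G : Matrix (Fin m) (Fin m) ℚ := A * Aᵀ with hG
  have hGentry : ∀ i i', G i i' = ∑ j, v i j * v i' j := by
    intro i i'; simp [hG, Matrix.mul_apply, hA]
  -- rows of G are ℚ-linearly independent
  have hGrows : LinearIndependent ℚ (fun i => G i) := by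
    rw [Fintype.linearIndependent_iff]
    intro c hc
    have hc' : ∀ i', ∑ i, c i * G i i' = 0 := by
      intro i'
      have := congrFun hc i'
      simpa [Finset.sum_apply] using this
    set u : ι → ℚ := fun j => ∑ i, c i * v i j with hu
    have husq : ∑ j, u j * u j = 0 := by
      have : ∑ j, u j * u j = ∑ i', c i' * (∑ i, c i * G i i') := by
        simp only [hu, hGentry, Finset.mul_sum, Finset.sum_mul]
        rw [Finset.sum_comm]
        congr 1; ext i'
        rw [Finset.sum_comm]
        congr 1; ext i
        congr 1; ext j
        ring
      simp [this, hc']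
    have hu0 : ∀ j, u j = 0 := by
      intro j
      have := (Finset.sum_eq_zero_iff_of_nonneg (fun j _ => mul_self_nonneg (u j))).1 husq j
        (Finset.mem_univ j)
      exact mul_self_eq_zero.1 this
    have : ∀ i, c i = 0 := by
      apply Fintype.linearIndependent_iff.1 hv
      funext j
      simpa [Finset.sum_apply, hu] using hu0 j
    exact this
  have hGdet : G.det ≠ 0 := by
    have := Matrix.linearIndependent_rows_iff_isUnit.1 hGrows
    exact (Matrix.isUnit_iff_isUnit_det G).1 this |>.ne_zero
  -- real Gram matrix
  set Gr : Matrix (Fin m) (Fin m) ℝ := G.map (Rat.castHom ℝ) with hGr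
  have hGrdet : Gr.det ≠ 0 := by
    rw [hGr, ← RingHom.mapMatrix_apply, ← RingHom.map_det]
    simpa using (Rat.cast_ne_zero (α := ℝ)).2 hGdet
  have hGrrows : LinearIndependent ℝ (fun i => Gr i) :=
    Matrix.linearIndependent_rows_iff_isUnit.2 ((Matrix.isUnit_iff_isUnit_det Gr).2
      (isUnit_iff_ne_zero.2 hGrdet))
  rw [Fintype.linearIndependent_iff]
  intro c hc
  have hc' : ∀ j, ∑ i, c i * (v i j : ℝ) = 0 := by
    intro j
    have := congrFun hc j
    simpa [Finset.sum_apply] using this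
  have key : ∑ i, c i • Gr i = 0 := by
    funext i'
    simp only [Finset.sum_apply, Pi.smul_apply, smul_eq_mul, Pi.zero_apply]
    have : ∀ i, Gr i i' = ∑ j, (v i j : ℝ) * (v i' j : ℝ) := by
      intro i; simp [hGr, hGentry, Rat.cast_sum]
    simp only [this, Finset.mul_sum]
    rw [Finset.sum_comm]
    apply Finset.sum_eq_zero
    intro j _
    have : ∑ i, c i * ((v i j : ℝ) * (v i' j : ℝ)) = (∑ i, c i * (v i j : ℝ)) * (v i' j : ℝ) := by
      rw [Finset.sum_mul]; congr 1; ext i; ring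
    rw [this, hc' j, zero_mul]
  exact Fintype.linearIndependent_iff.1 hGrrows c key

open Finset in
lemma coeff_rat {ι : Type*} [Fintype ι] {m : ℕ} {v : Fin m → ι → ℚ} {u : ι → ℚ}
    {w : Fin m → ℝ}
    (hli : LinearIndependent ℝ (fun i (j : ι) => ((v i j : ℚ) : ℝ)))
    (hu : (fun j => ((u j : ℚ) : ℝ)) = ∑ i, w i • (fun j => ((v i j : ℚ) : ℝ))) :
    ∀ i, ∃ q : ℚ, w i = (q : ℝ) := by
  have hvQ : LinearIndependent ℚ v := by
    rw [Fintype.linearIndependent_iff]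
    intro c hc
    have hcast : ∑ i, ((c i : ℝ)) • (fun j => ((v i j : ℚ) : ℝ)) = 0 := by
      funext j
      have := congrFun hc j
      simp only [Finset.sum_apply, Pi.smul_apply, smul_eq_mul, Pi.zero_apply] at this ⊢
      exact_mod_cast this
    intro i
    exact_mod_cast Fintype.linearIndependent_iff.1 hli _ hcast i
  by_cases hmem : u ∈ Submodule.span ℚ (Set.range v)
  · obtain ⟨q, hq⟩ := (Submodule.mem_span_range_iff_exists_fun ℚ).1 hmem
    have hcast : ∑ i, ((q i : ℝ)) • (fun j => ((v i j : ℚ) : ℝ)) =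
        (fun j => ((u j : ℚ) : ℝ)) := by
      funext j
      have := congrFun hq j
      simp only [Finset.sum_apply, Pi.smul_apply, smul_eq_mul] at this ⊢
      exact_mod_cast this
    intro i
    refine ⟨q i, ?_⟩
    have hdiff : ∑ i, (w i - (q i : ℝ)) • (fun j => ((v i j : ℚ) : ℝ)) = 0 := by
      simp only [sub_smul, Finset.sum_sub_distrib]
      rw [← hu, hcast, sub_self]
    have := Fintype.linearIndependent_iff.1 hli _ hdiff i
    linarith [this]
  · exfalso
    have hsnoc : LinearIndependent ℚ (Fin.snoc v u : Fin (m+1) → ι → ℚ) :=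
      linearIndependent_fin_snoc.2 ⟨hvQ, hmem⟩
    have hsnocR := cast_li hsnoc
    have heq : (fun i (j : ι) => (((Fin.snoc v u : Fin (m+1) → ι → ℚ) i j : ℚ) : ℝ)) =
        Fin.snoc (fun i (j : ι) => ((v i j : ℚ) : ℝ)) (fun j => ((u j : ℚ) : ℝ)) := by
      funext i
      induction i using Fin.lastCases with
      | last => simp
      | cast i => simp
    rw [heq] at hsnocR
    have := (linearIndependent_fin_snoc.1 hsnocR).2
    apply this
    rw [hu]
    exact Submodule.sum_mem _ fun i _ =>
      Submodule.smul_mem _ _ (Submodule.subset_span ⟨i, rfl⟩)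

open Finset in
lemma rat_combo {ι : Type*} [Fintype ι] {m : ℕ} {p : Fin m → ι → ℚ} {x : ι → ℚ}
    {w : Fin m → ℝ} (h1 : ∑ i, w i = 1)
    (haff : AffineIndependent ℝ (fun i (j : ι) => ((p i j : ℚ) : ℝ)))
    (hx : (fun j => ((x j : ℚ) : ℝ)) = ∑ i, w i • (fun j => ((p i j : ℚ) : ℝ))) :
    ∀ i, ∃ q : ℚ, w i = (q : ℝ) := by
  rcases m with _ | k
  · exfalso; simp at h1
  set P : Fin (k + 1) → ι → ℝ := fun i j => ((p i j : ℚ) : ℝ) with hP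
  set X : ι → ℝ := fun j => ((x j : ℚ) : ℝ) with hX
  set v : Fin k → ι → ℚ := fun i => p i.succ - p 0 with hv
  have hCv : ∀ i, (fun j => ((v i j : ℚ) : ℝ)) = P i.succ - P 0 := by
    intro i; funext j; simp [hv, hP]
  -- linear independence of the cast differences
  have hli : LinearIndependent ℝ (fun i (j : ι) => ((v i j : ℚ) : ℝ)) := by
    have h0 := (affineIndependent_iff_linearIndependent_vsub ℝ _ (0 : Fin (k + 1))).1 haff
    have hf : Function.Injective
        (fun i : Fin k => (⟨i.succ, Fin.succ_ne_zero i⟩ : {x : Fin (k + 1) // x ≠ 0})) := by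
      intro a b hab
      have : a.succ = b.succ := congrArg Subtype.val hab
      exact Fin.succ_injective _ this
    have := h0.comp _ hf
    convert this using 1
    funext i
    rw [hCv]
    rfl
    all_goals rfl
  -- the combination for the differences
  have hueq : (fun j => (((x - p 0) j : ℚ) : ℝ)) =
      ∑ i : Fin k, w i.succ • (fun j => ((v i j : ℚ) : ℝ)) := by
    have hstep : X - P 0 = ∑ i : Fin k, w i.succ • (P i.succ - P 0) := by
      calc X - P 0 = (∑ i, w i • P i) - (∑ i, w i) • P 0 := by rw [hx, h1, one_smul]
        _ = ∑ i, (w i • P i - w i • P 0) := by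
            rw [Finset.sum_sub_distrib, Finset.sum_smul]
        _ = ∑ i, w i • (P i - P 0) := by simp [smul_sub]
        _ = ∑ i : Fin k, w i.succ • (P i.succ - P 0) := by
            rw [Fin.sum_univ_succ]; simp
    have hl : (fun j => (((x - p 0) j : ℚ) : ℝ)) = X - P 0 := by
      funext j; simp [hX, hP]
    rw [hl, hstep]
    congr 1; funext i; rw [hCv]
  have hq := coeff_rat hli hueq
  intro i
  induction i using Fin.cases with
  | succ i => exact hq i
  | zero =>
    choose q hq' using hq
    refine ⟨1 - ∑ i, q i, ?_⟩
    have : w 0 = 1 - ∑ i : Fin k, w i.succ := by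
      rw [Fin.sum_univ_succ] at h1; linarith
    rw [this]
    push_cast
    rw [Finset.sum_congr rfl fun i _ => hq' i]

open TensorProduct in
lemma tmul_one_inj {M : Type*} [AddCommGroup M] [Module.Free ℤ M] [Module.Finite ℤ M] :
    Function.Injective (fun y : M => ((1 : ℝ) ⊗ₜ[ℤ] y : ℝ ⊗[ℤ] M)) := by
  intro y y' h
  have h' : ((1 : ℝ) ⊗ₜ[ℤ] y : ℝ ⊗[ℤ] M) = (1 : ℝ) ⊗ₜ[ℤ] y' := h
  set b := Module.Free.chooseBasis ℤ M with hb
  set B := b.baseChange ℝ with hB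
  have hr : ∀ (z : M) (j), B.repr ((1 : ℝ) ⊗ₜ[ℤ] z) j = ((b.repr z j : ℤ) : ℝ) := by
    intro z j
    rw [hB, Module.Basis.baseChange_repr_tmul]
    simp [zsmul_eq_mul]
  have : ∀ j, ((b.repr y j : ℤ) : ℝ) = ((b.repr y' j : ℤ) : ℝ) := by
    intro j; rw [← hr y j, ← hr y' j, h']
  have hrepr : b.repr y = b.repr y' := by
    ext j
    exact_mod_cast this j
  have := congrArg (b.repr.symm) hrepr
  simpa using this

open TensorProduct Finset in
lemma key_rat {M : Type*} [AddCommGroup M] [Module.Free ℤ M] [Module.Finite ℤ M]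
    {m : ℕ} (p : Fin m → M) (x : M) (w : Fin m → ℝ)
    (h1 : ∑ i, w i = 1)
    (haff : AffineIndependent ℝ (fun i => ((1 : ℝ) ⊗ₜ[ℤ] p i : ℝ ⊗[ℤ] M)))
    (hx : ((1 : ℝ) ⊗ₜ[ℤ] x : ℝ ⊗[ℤ] M) = ∑ i, w i • ((1 : ℝ) ⊗ₜ[ℤ] p i)) :
    ∀ i, ∃ q : ℚ, w i = (q : ℝ) := by
  classical
  set b := Module.Free.chooseBasis ℤ M with hb
  set B := b.baseChange ℝ with hB
  set e := B.equivFun with he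
  have hcomp : ∀ z : M,
      (fun j => (((((b.repr z) j : ℤ) : ℚ) : ℚ) : ℝ)) = e ((1 : ℝ) ⊗ₜ[ℤ] z) := by
    intro z
    funext j
    rw [he, Module.Basis.equivFun_apply, hB, Module.Basis.baseChange_repr_tmul]
    simp [zsmul_eq_mul]
  have haff' : AffineIndependent ℝ
      (fun i (j : Module.Free.ChooseBasisIndex ℤ M) => (((b.repr (p i)) j : ℤ) : ℝ)) := by
    have hmap := haff.map' e.toLinearMap.toAffineMap (by
      intro a b hab
      exact e.injective hab)
    convert hmap using 1
    rotate_left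
    funext i
    have := (hcomp (p i)).symm
    funext j
    have hj := congrFun this j
    simpa using hj.symm
    rfl
  have hx' : (fun j => (((b.repr x) j : ℤ) : ℝ)) =
      ∑ i, w i • (fun j => (((b.repr (p i)) j : ℤ) : ℝ)) := by
    have hmap := congrArg e hx
    rw [map_sum] at hmap
    simp only [map_smul] at hmap
    have hl := hcomp x
    have hr := fun i => hcomp (p i)
    simp only [Rat.cast_intCast] at hl hr
    rw [hl, hmap]
    congr 1
    funext i
    rw [← hr i]
  have haff2 : AffineIndependent ℝ
      (fun i (j : Module.Free.ChooseBasisIndex ℤ M) => ((((b.repr (p i)) j : ℤ) : ℚ) : ℝ)) := by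
    simpa using haff'
  have hx2 : (fun j => ((((b.repr x) j : ℤ) : ℚ) : ℝ)) =
      ∑ i, w i • (fun j => ((((b.repr (p i)) j : ℤ) : ℚ) : ℝ)) := by
    simpa using hx'
  exact rat_combo (p := fun i j => (((b.repr (p i)) j : ℤ) : ℚ))
    (x := fun j => (((b.repr x) j : ℤ) : ℚ)) (w := w) h1 haff2 hx2

open TensorProduct Finset in
lemma key_int {M : Type*} [AddCommGroup M] [Module.Free ℤ M] [Module.Finite ℤ M]
    {m : ℕ} (p : Fin m → M) (x : M) (w : Fin m → ℝ)
    (hw : ∀ i, 0 ≤ w i) (h1 : ∑ i, w i = 1)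
    (haff : AffineIndependent ℝ (fun i => ((1 : ℝ) ⊗ₜ[ℤ] p i : ℝ ⊗[ℤ] M)))
    (hx : ((1 : ℝ) ⊗ₜ[ℤ] x : ℝ ⊗[ℤ] M) = ∑ i, w i • ((1 : ℝ) ⊗ₜ[ℤ] p i)) :
    ∃ l : ℕ, 0 < l ∧ ∃ K : Fin m → ℕ, ∑ i, K i = l ∧ l • x = ∑ i, K i • p i := by
  choose q hq using key_rat p x w h1 haff hx
  have hq0 : ∀ i, 0 ≤ q i := by
    intro i
    have := hw i
    rw [hq i] at this
    exact_mod_cast this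
  have hqs : ∑ i, q i = 1 := by
    have : ((∑ i, q i : ℚ) : ℝ) = 1 := by
      push_cast
      rw [← h1]
      exact Finset.sum_congr rfl fun i _ => (hq i).symm
    exact_mod_cast this
  set D : ℕ := ∏ i, (q i).den with hD
  have hDpos : 0 < D := Finset.prod_pos fun i _ => (q i).pos
  set z : Fin m → ℤ := fun i => (q i).num * ((D / (q i).den : ℕ) : ℤ) with hz
  have hcast : ∀ i, ((z i : ℤ) : ℚ) = q i * D := by
    intro i
    have hdvd : (q i).den ∣ D := Finset.dvd_prod_of_mem _ (Finset.mem_univ i)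
    have h2 : ((q i).den : ℚ) * ((D / (q i).den : ℕ) : ℚ) = (D : ℚ) := by
      rw [← Nat.cast_mul, Nat.mul_div_cancel' hdvd]
    calc ((z i : ℤ) : ℚ) = ((q i).num : ℚ) * ((D / (q i).den : ℕ) : ℚ) := by
          rw [hz]; rw [Int.cast_mul, Int.cast_natCast]
      _ = (q i * (q i).den) * ((D / (q i).den : ℕ) : ℚ) := by rw [Rat.mul_den_eq_num]
      _ = q i * (((q i).den : ℚ) * ((D / (q i).den : ℕ) : ℚ)) := by ring
      _ = q i * D := by rw [h2]
  have hz0 : ∀ i, 0 ≤ z i := by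
    intro i
    have : (0 : ℚ) ≤ ((z i : ℤ) : ℚ) := by
      rw [hcast i]
      exact mul_nonneg (hq0 i) (Nat.cast_nonneg D)
    exact_mod_cast this
  set K : Fin m → ℕ := fun i => (z i).toNat with hK
  have hKz : ∀ i, ((K i : ℕ) : ℤ) = z i := fun i => Int.toNat_of_nonneg (hz0 i)
  have hKq : ∀ i, ((K i : ℕ) : ℚ) = q i * D := by
    intro i
    rw [← hcast i, ← hKz i]
    push_cast
    ring
  have hKs : ∑ i, K i = D := by
    have : ((∑ i, K i : ℕ) : ℚ) = (D : ℚ) := by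
      push_cast
      rw [Finset.sum_congr rfl fun i _ => hKq i, ← Finset.sum_mul, hqs, one_mul]
    exact_mod_cast this
  refine ⟨D, hDpos, K, hKs, ?_⟩
  apply tmul_one_inj
  show ((1 : ℝ) ⊗ₜ[ℤ] (D • x) : ℝ ⊗[ℤ] M) = (1 : ℝ) ⊗ₜ[ℤ] (∑ i, K i • p i)
  set f : M →ₗ[ℤ] ℝ ⊗[ℤ] M := TensorProduct.mk ℤ ℝ M 1 with hf
  have hfa : ∀ y : M, f y = (1 : ℝ) ⊗ₜ[ℤ] y := fun y => rfl
  have lhs : ((1 : ℝ) ⊗ₜ[ℤ] (D • x) : ℝ ⊗[ℤ] M) = D • ((1 : ℝ) ⊗ₜ[ℤ] x : ℝ ⊗[ℤ] M) := by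
    rw [← hfa (D • x), ← hfa x]
    exact map_nsmul f D x
  have rhs : ((1 : ℝ) ⊗ₜ[ℤ] (∑ i, K i • p i) : ℝ ⊗[ℤ] M) =
      ∑ i, K i • ((1 : ℝ) ⊗ₜ[ℤ] p i : ℝ ⊗[ℤ] M) := by
    rw [← hfa (∑ i, K i • p i), map_sum]
    exact Finset.sum_congr rfl fun i _ => by rw [map_nsmul, hfa]
  rw [lhs, rhs, hx, Finset.smul_sum]
  apply Finset.sum_congr rfl
  intro i _
  rw [← Nat.cast_smul_eq_nsmul ℝ D (w i • ((1 : ℝ) ⊗ₜ[ℤ] p i : ℝ ⊗[ℤ] M)),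
      ← Nat.cast_smul_eq_nsmul ℝ (K i) ((1 : ℝ) ⊗ₜ[ℤ] p i : ℝ ⊗[ℤ] M), smul_smul]
  congr 1
  have h3 : ((K i : ℕ) : ℝ) = (q i : ℝ) * (D : ℝ) := by exact_mod_cast hKq i
  rw [hq i, h3]
  ring

/-- Let `M` be a free `ℤ`-module of finite rank.  For a subset `Γ ⊆ M` the
following are equivalent:
(a) there exist a `ℤ`-submodule `N` of `M` and a convex subset `Δ ⊆ M ⊗ ℝ` with `Γ = N ∩ Δ`
    (intersection taken via the natural map `M → M ⊗ ℝ`, `x ↦ 1 ⊗ x`);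
(c) `Γ` consists exactly of those elements `x` of the `ℤ`-span of `Γ` that are averages of
    finitely many elements of `Γ`, i.e. `l • x = γ₁ + ⋯ + γ_l` for some `l ≥ 1` and
    `γ₁, …, γ_l ∈ Γ`. -/
theorem stmt_8 {M : Type*} [AddCommGroup M] [Module.Free ℤ M] [Module.Finite ℤ M]
    (Γ : Set M) :
    (∃ (N : Submodule ℤ M) (Δ : Set (ℝ ⊗[ℤ] M)), Convex ℝ Δ ∧
      Γ = {x : M | x ∈ N ∧ ((1 : ℝ) ⊗ₜ[ℤ] x : ℝ ⊗[ℤ] M) ∈ Δ}) ↔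
    Γ = {x : M | x ∈ Submodule.span ℤ Γ ∧ ∃ l : ℕ, 0 < l ∧ ∃ γ : Fin l → M,
      (∀ i, γ i ∈ Γ) ∧ (l : ℤ) • x = ∑ i, γ i} := by
  classical
  constructor
  · rintro ⟨N, Δ, hconv, hΓ⟩
    ext x
    simp only [Set.mem_setOf_eq]
    constructor
    · intro hx
      refine ⟨Submodule.subset_span hx, 1, one_pos, fun _ => x, fun _ => hx, ?_⟩
      simp
    · rintro ⟨hspan, l, hl, γ, hγ, hsum⟩
      have hΓN : Γ ⊆ (N : Set M) := by
        intro y hy; rw [hΓ] at hy; exact hy.1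
      rw [hΓ]
      refine ⟨(Submodule.span_le.2 hΓN) hspan, ?_⟩
      have hmem : ∀ i, ((1 : ℝ) ⊗ₜ[ℤ] γ i : ℝ ⊗[ℤ] M) ∈ Δ := by
        intro i; have := hγ i; rw [hΓ] at this; exact this.2
      have hlR : ((l : ℝ)) ≠ 0 := Nat.cast_ne_zero.2 hl.ne'
      have hcomb := hconv.sum_mem (t := (Finset.univ : Finset (Fin l)))
        (w := fun _ : Fin l => (l : ℝ)⁻¹) (z := fun i => ((1 : ℝ) ⊗ₜ[ℤ] γ i : ℝ ⊗[ℤ] M))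
        (fun i _ => by positivity)
        (by simp [Finset.card_univ, mul_inv_cancel₀ hlR])
        (fun i _ => hmem i)
      have heq : ((1 : ℝ) ⊗ₜ[ℤ] x : ℝ ⊗[ℤ] M) =
          ∑ i : Fin l, (l : ℝ)⁻¹ • ((1 : ℝ) ⊗ₜ[ℤ] γ i : ℝ ⊗[ℤ] M) := by
        set f : M →ₗ[ℤ] ℝ ⊗[ℤ] M := TensorProduct.mk ℤ ℝ M 1 with hf
        have hfa : ∀ y : M, f y = (1 : ℝ) ⊗ₜ[ℤ] y := fun y => rfl
        have h2 : ((l : ℤ)) • ((1 : ℝ) ⊗ₜ[ℤ] x : ℝ ⊗[ℤ] M) =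
            ∑ i : Fin l, ((1 : ℝ) ⊗ₜ[ℤ] γ i : ℝ ⊗[ℤ] M) := by
          rw [← hfa x, ← map_zsmul f, hsum, map_sum]
          exact Finset.sum_congr rfl fun i _ => hfa (γ i)
        have h3 : ((l : ℝ)) • ((1 : ℝ) ⊗ₜ[ℤ] x : ℝ ⊗[ℤ] M) =
            ∑ i : Fin l, ((1 : ℝ) ⊗ₜ[ℤ] γ i : ℝ ⊗[ℤ] M) := by
          rw [← h2]
          have := Int.cast_smul_eq_zsmul ℝ (l : ℤ) ((1 : ℝ) ⊗ₜ[ℤ] x : ℝ ⊗[ℤ] M)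
          rw [← this]
          norm_num
        rw [← Finset.smul_sum, ← h3, smul_smul, inv_mul_cancel₀ hlR, one_smul]
      rw [heq]
      exact hcomb
  · intro hc
    refine ⟨Submodule.span ℤ Γ,
      convexHull ℝ ((fun y : M => ((1 : ℝ) ⊗ₜ[ℤ] y : ℝ ⊗[ℤ] M)) '' Γ),
      convex_convexHull ℝ _, ?_⟩
    ext x
    simp only [Set.mem_setOf_eq]
    constructor
    · intro hx
      exact ⟨Submodule.subset_span hx, subset_convexHull ℝ _ ⟨x, hx, rfl⟩⟩
    · rintro ⟨hspan, hhull⟩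
      obtain ⟨ι', hfin, z, w, hzs, haff, hw0, hw1, hcomb⟩ :=
        eq_pos_convex_span_of_mem_convexHull hhull
      set n := Fintype.card ι' with hn
      set e := Fintype.equivFin ι' with he
      have hzg : ∀ i : Fin n, ∃ g : M, g ∈ Γ ∧
          ((1 : ℝ) ⊗ₜ[ℤ] g : ℝ ⊗[ℤ] M) = z (e.symm i) := by
        intro i
        have : z (e.symm i) ∈ (fun y : M => ((1 : ℝ) ⊗ₜ[ℤ] y : ℝ ⊗[ℤ] M)) '' Γ :=
          hzs ⟨e.symm i, rfl⟩
        obtain ⟨g, hg1, hg2⟩ := this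
        exact ⟨g, hg1, hg2⟩
      choose g hgΓ hgz using hzg
      set w' : Fin n → ℝ := fun i => w (e.symm i) with hw'
      have hw'0 : ∀ i, 0 ≤ w' i := fun i => (hw0 (e.symm i)).le
      have hw'1 : ∑ i, w' i = 1 := by
        rw [hw']
        rw [Equiv.sum_comp e.symm w]
        exact hw1
      have haff' : AffineIndependent ℝ (fun i : Fin n => ((1 : ℝ) ⊗ₜ[ℤ] g i : ℝ ⊗[ℤ] M)) := by
        have h1 : AffineIndependent ℝ (z ∘ e.symm) := (affineIndependent_equiv e.symm).2 haff
        have : (fun i : Fin n => ((1 : ℝ) ⊗ₜ[ℤ] g i : ℝ ⊗[ℤ] M)) = z ∘ e.symm := by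
          funext i; exact hgz i
        rw [this]
        exact h1
      have hcomb' : ((1 : ℝ) ⊗ₜ[ℤ] x : ℝ ⊗[ℤ] M) =
          ∑ i : Fin n, w' i • ((1 : ℝ) ⊗ₜ[ℤ] g i : ℝ ⊗[ℤ] M) := by
        rw [show (∑ i : Fin n, w' i • ((1 : ℝ) ⊗ₜ[ℤ] g i : ℝ ⊗[ℤ] M)) =
            ∑ i : Fin n, w (e.symm i) • z (e.symm i) from
          Finset.sum_congr rfl fun i _ => by rw [hw', hgz i]]
        rw [Equiv.sum_comp e.symm (fun j => w j • z j)]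
        exact hcomb.symm
      obtain ⟨l, hl, K, hKs, hEq⟩ := key_int g x w' hw'0 hw'1 haff' hcomb'
      rw [hc]
      refine ⟨hspan, ?_⟩
      set σ := (Σ i : Fin n, Fin (K i)) with hσ
      set l' := Fintype.card σ with hl'
      have hl'eq : l' = l := by
        have h4 : l' = ∑ i, K i := by simp [hl', hσ]
        rw [h4, hKs]
      set e' := Fintype.equivFin σ with he'
      refine ⟨l', by rw [hl'eq]; exact hl, fun j => g ((e'.symm j).1), fun j => hgΓ _, ?_⟩
      have hsum2 : ∑ j : Fin l', g ((e'.symm j).1) = ∑ s : σ, g s.1 :=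
        Equiv.sum_comp e'.symm (fun s : σ => g s.1)
      have hsum3 : ∑ s : σ, g s.1 = ∑ i : Fin n, K i • g i := by
        rw [← Finset.univ_sigma_univ, Finset.sum_sigma]
        exact Finset.sum_congr rfl fun i _ => by simp
      rw [hsum2, hsum3, ← hEq, hl'eq]
      exact natCast_zsmul x l
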